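/- Let q > 0, u ∈ H^{1,1}(ℝ⁺) with ∫_{x₀}^∞ |u| < 1/2 for some x₀ > 0, and z ∈ ℂ⁺. Then the Volterra-type integral equation f(x) = e₂ + (T f)(x) on [x₀,∞), where (T f)(x) = ∫_{x₀}^x diag(e^{-iz(y-x)}, 0) Q(y) f(y) dy - ∫_x^∞ diag(0, 1) Q(y) f(y) dy and Q = [[0,u],[-conj(u),0]], has a solution f ∈ L^∞([x₀,∞); ℂ²) obtained as the limit of the iterates f₀ = e₂, f_{k+1} = e₂ + T f_k, which converge geometrically: ‖f_{k+1} - f_k‖_{L^∞} ≤ c/2^k. -/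

import Mathlib

open MeasureTheory Matrix Complex Set Filter

noncomputable def Qmat (u : ℝ → ℂ) (x : ℝ) : Matrix (Fin 2) (Fin 2) ℂ :=
  !![0, u x; -(starRingEnd ℂ) (u x), 0]

/-- The Volterra-type operator
`(T g)(x) = ∫_{x₀}^x diag(e^{-iz(y-x)},0) Q(y) g(y) dy
            - ∫_x^∞ diag(0,1) Q(y) g(y) dy`. -/
noncomputable def volterraT (u : ℝ → ℂ) (z : ℂ) (x₀ : ℝ)
    (g : ℝ → Fin 2 → ℂ) (x : ℝ) : Fin 2 → ℂ :=
  (∫ y in x₀..x,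
      (Matrix.diagonal ![Complex.exp (-(Complex.I * z) * ((y : ℂ) - (x : ℂ))), 0]) *ᵥ
        (Qmat u y *ᵥ g y)) -
    ∫ y in Ioi x, (Matrix.diagonal ![(0:ℂ), 1]) *ᵥ (Qmat u y *ᵥ g y)

open Topology

section VolterraAux

variable {u : ℝ → ℂ} {x₀ : ℝ} {z : ℂ}

/-- Component form of the Volterra operator. -/
lemma volterraT_eq (u : ℝ → ℂ) (z : ℂ) (x₀ : ℝ) (g : ℝ → Fin 2 → ℂ) (x : ℝ) :
    volterraT u z x₀ g x =
      ![∫ y in x₀..x, Complex.exp (-(Complex.I * z) * ((y : ℂ) - (x : ℂ))) * (u y * g y 1),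
        ∫ y in Ioi x, (starRingEnd ℂ) (u y) * g y 0] := by
  unfold volterraT
  have h1 : ∀ y : ℝ,
      (Matrix.diagonal ![Complex.exp (-(Complex.I * z) * ((y : ℂ) - (x : ℂ))), 0]) *ᵥ
        (Qmat u y *ᵥ g y)
      = (Complex.exp (-(Complex.I * z) * ((y : ℂ) - (x : ℂ))) * (u y * g y 1)) • ![1, 0] := by
    intro y
    funext i
    fin_cases i <;>
      simp [Qmat, Matrix.mulVec, Matrix.diagonal, dotProduct, Fin.sum_univ_two, mul_comm]
  have h2 : ∀ y : ℝ,
      (Matrix.diagonal ![(0:ℂ), 1]) *ᵥ (Qmat u y *ᵥ g y)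
      = (-((starRingEnd ℂ) (u y) * g y 0)) • ![0, 1] := by
    intro y
    funext i
    fin_cases i <;>
      simp [Qmat, Matrix.mulVec, Matrix.diagonal, dotProduct, Fin.sum_univ_two, mul_comm]
  simp_rw [h1, h2, intervalIntegral.integral_smul_const, integral_smul_const,
    MeasureTheory.integral_neg]
  funext i
  fin_cases i <;> simp

lemma vec2_sub (a b c d : ℂ) : (![a, b] - ![c, d]) = ![a - c, b - d] := by
  funext i; fin_cases i <;> simp

lemma volterraT_zero (u : ℝ → ℂ) (z : ℂ) (x₀ : ℝ) (x : ℝ) :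
    volterraT u z x₀ (fun _ => 0) x = 0 := by
  unfold volterraT
  simp_rw [Matrix.mulVec_zero]
  simp

lemma abs_kernel_le_one (hz : 0 < z.im) {x y : ℝ} (hyx : y ≤ x) :
    ‖Complex.exp (-(Complex.I * z) * ((y : ℂ) - (x : ℂ)))‖ ≤ 1 := by
  rw [Complex.norm_exp, Real.exp_le_one_iff]
  have h1 : ((y : ℂ) - (x : ℂ)) = ((y - x : ℝ) : ℂ) := by push_cast; ring
  rw [h1]
  have h2 : (-(Complex.I * z) * ((y - x : ℝ) : ℂ)).re = z.im * (y - x) := by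
    simp [Complex.mul_re]
  rw [h2]
  nlinarith

lemma integrable_exp_mul (hint : IntegrableOn u (Ioi x₀))
    (φ : ℝ → ℂ) (hφ : AEStronglyMeasurable φ (volume.restrict (Ici x₀)))
    (M : ℝ) (hM : ∀ y ∈ Ici x₀, ‖φ y‖ ≤ M) (w : ℂ) (b : ℝ) :
    IntegrableOn (fun y : ℝ => Complex.exp (w * (y : ℂ)) * (u y * φ y)) (Ioc x₀ b) := by
  have hsub : Ioc x₀ b ⊆ Ioi x₀ := Ioc_subset_Ioi_self
  have hsub' : Ioc x₀ b ⊆ Ici x₀ := fun y hy => le_of_lt hy.1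
  set C : ℝ := Real.exp (max (w.re * x₀) (w.re * b)) with hC
  have hmeas : AEStronglyMeasurable (fun y : ℝ => Complex.exp (w * (y : ℂ)) * (u y * φ y))
      (volume.restrict (Ioc x₀ b)) := by
    have hexp : Continuous fun y : ℝ => Complex.exp (w * (y : ℂ)) :=
      Complex.continuous_exp.comp (continuous_const.mul Complex.continuous_ofReal)
    exact hexp.aestronglyMeasurable.mul
      ((hint.aestronglyMeasurable.mono_measure
          (Measure.restrict_mono hsub le_rfl)).mul
        (hφ.mono_measure (Measure.restrict_mono hsub' le_rfl)))
  have hbound : IntegrableOn (fun y => C * (‖u y‖ * M)) (Ioc x₀ b) :=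
    ((hint.norm.mul_const M).const_mul C).mono_measure (Measure.restrict_mono hsub le_rfl)
  refine Integrable.mono' hbound hmeas ?_
  filter_upwards [ae_restrict_of_forall_mem measurableSet_Ioc
    (fun y (hy : y ∈ Ioc x₀ b) => hy)] with y hy
  have h1 : ‖Complex.exp (w * (y : ℂ))‖ ≤ C := by
    rw [Complex.norm_exp]
    apply Real.exp_le_exp.2
    have : (w * (y : ℂ)).re = w.re * y := by simp [Complex.mul_re]
    rw [this]
    rcases le_or_gt 0 w.re with h | h
    · exact le_max_of_le_right (mul_le_mul_of_nonneg_left hy.2 h)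
    · exact le_max_of_le_left (by nlinarith [hy.1.le])
  calc ‖Complex.exp (w * (y : ℂ)) * (u y * φ y)‖
      = ‖Complex.exp (w * (y : ℂ))‖ * (‖u y‖ * ‖φ y‖) := by
        simp [_root_.map_mul, mul_assoc]
    _ ≤ C * (‖u y‖ * M) := by
        have h2 : ‖φ y‖ ≤ M := hM y (hsub' hy)
        have hMnn : 0 ≤ M := le_trans (norm_nonneg _) h2
        gcongr

lemma integrable_kernel (hint : IntegrableOn u (Ioi x₀))
    (φ : ℝ → ℂ) (hφ : AEStronglyMeasurable φ (volume.restrict (Ici x₀)))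
    (M : ℝ) (hM : ∀ y ∈ Ici x₀, ‖φ y‖ ≤ M) (x : ℝ) :
    IntegrableOn
      (fun y : ℝ => Complex.exp (-(Complex.I * z) * ((y : ℂ) - (x : ℂ))) * (u y * φ y))
      (Ioc x₀ x) := by
  have heq : ∀ y : ℝ,
      Complex.exp (-(Complex.I * z) * ((y : ℂ) - (x : ℂ))) * (u y * φ y)
      = Complex.exp ((Complex.I * z) * (x : ℂ)) *
          (Complex.exp (-(Complex.I * z) * (y : ℂ)) * (u y * φ y)) := by
    intro y
    have h : -(Complex.I * z) * ((y : ℂ) - (x : ℂ))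
        = (Complex.I * z) * (x : ℂ) + -(Complex.I * z) * (y : ℂ) := by ring
    rw [h, Complex.exp_add, mul_assoc]
  simp_rw [heq]
  exact (integrable_exp_mul hint φ hφ M hM (-(Complex.I * z)) x).const_mul _

lemma integrable_conj_mul (hint : IntegrableOn u (Ioi x₀))
    (φ : ℝ → ℂ) (hφ : AEStronglyMeasurable φ (volume.restrict (Ici x₀)))
    (M : ℝ) (hM : ∀ y ∈ Ici x₀, ‖φ y‖ ≤ M) (x : ℝ) (hx : x₀ ≤ x) :
    IntegrableOn (fun y : ℝ => (starRingEnd ℂ) (u y) * φ y) (Ioi x) := by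
  have hsub : Ioi x ⊆ Ioi x₀ := Ioi_subset_Ioi hx
  have hsub' : Ioi x ⊆ Ici x₀ := fun y hy => le_of_lt (lt_of_le_of_lt hx hy)
  have hmeas : AEStronglyMeasurable (fun y : ℝ => (starRingEnd ℂ) (u y) * φ y)
      (volume.restrict (Ioi x)) := by
    exact ((Complex.continuous_conj.comp_aestronglyMeasurable
        (hint.aestronglyMeasurable.mono_measure (Measure.restrict_mono hsub le_rfl))).mul
      (hφ.mono_measure (Measure.restrict_mono hsub' le_rfl)))
  have hbound : IntegrableOn (fun y => ‖u y‖ * M) (Ioi x) :=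
    (hint.norm.mul_const M).mono_measure (Measure.restrict_mono hsub le_rfl)
  refine Integrable.mono' hbound hmeas ?_
  filter_upwards [ae_restrict_of_forall_mem measurableSet_Ioi
    (fun y (hy : y ∈ Ioi x) => hy)] with y hy
  calc ‖(starRingEnd ℂ) (u y) * φ y‖ = ‖u y‖ * ‖φ y‖ := by
        simp [_root_.map_mul]
    _ ≤ ‖u y‖ * M := by
        have := hM y (hsub' hy)
        gcongr

/-- The key contraction estimate for the Volterra operator. -/
lemma T_sub_bound (hint : IntegrableOn u (Ioi x₀)) (hz : 0 < z.im)
    (g h : ℝ → Fin 2 → ℂ)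
    (hg0 : AEStronglyMeasurable (fun y => g y 0) (volume.restrict (Ici x₀)))
    (hg1 : AEStronglyMeasurable (fun y => g y 1) (volume.restrict (Ici x₀)))
    (hh0 : AEStronglyMeasurable (fun y => h y 0) (volume.restrict (Ici x₀)))
    (hh1 : AEStronglyMeasurable (fun y => h y 1) (volume.restrict (Ici x₀)))
    (Mg Mh δ : ℝ) (hδ : 0 ≤ δ)
    (hgB : ∀ y ∈ Ici x₀, ‖g y‖ ≤ Mg) (hhB : ∀ y ∈ Ici x₀, ‖h y‖ ≤ Mh)
    (hdB : ∀ y ∈ Ici x₀, ‖g y - h y‖ ≤ δ)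
    (x : ℝ) (hx : x₀ ≤ x) :
    ‖volterraT u z x₀ g x - volterraT u z x₀ h x‖ ≤ (∫ y in Ioi x₀, ‖u y‖) * δ := by
  set a : ℝ := ∫ y in Ioi x₀, ‖u y‖ with ha
  have ha0 : 0 ≤ a := by
    apply integral_nonneg
    intro y
    exact norm_nonneg _
  have hcomp : ∀ (v : ℝ → Fin 2 → ℂ) (M : ℝ), (∀ y ∈ Ici x₀, ‖v y‖ ≤ M) →
      ∀ i : Fin 2, ∀ y ∈ Ici x₀, ‖v y i‖ ≤ M := fun v M hv i y hy =>
    le_trans (norm_le_pi_norm (v y) i) (hv y hy)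
  have hd1B : ∀ y ∈ Ici x₀, ‖g y 1 - h y 1‖ ≤ δ := by
    intro y hy
    have := hcomp (fun y => g y - h y) δ hdB 1 y hy
    simpa using this
  have hd0B : ∀ y ∈ Ici x₀, ‖g y 0 - h y 0‖ ≤ δ := by
    intro y hy
    have := hcomp (fun y => g y - h y) δ hdB 0 y hy
    simpa using this
  have Ig1 := integrable_kernel (z := z) hint (fun y => g y 1) hg1 Mg (hcomp g Mg hgB 1) x
  have Ih1 := integrable_kernel (z := z) hint (fun y => h y 1) hh1 Mh (hcomp h Mh hhB 1) x
  have Ig0 := integrable_conj_mul hint (fun y => g y 0) hg0 Mg (hcomp g Mg hgB 0) x hx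
  have Ih0 := integrable_conj_mul hint (fun y => h y 0) hh0 Mh (hcomp h Mh hhB 0) x hx
  have hu_abs : IntegrableOn (fun y : ℝ => ‖u y‖ * δ) (Ioi x₀) := hint.norm.mul_const δ
  have hIoi : ∫ y in Ioi x₀, ‖u y‖ * δ = a * δ := by
    rw [MeasureTheory.integral_mul_const]
  rw [volterraT_eq, volterraT_eq, vec2_sub]
  refine (pi_norm_le_iff_of_nonneg (mul_nonneg ha0 hδ)).2 ?_
  intro i
  fin_cases i
  · simp only [Matrix.cons_val_zero]
    rw [intervalIntegral.integral_of_le hx, intervalIntegral.integral_of_le hx,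
      ← MeasureTheory.integral_sub Ig1 Ih1]
    calc ‖∫ y in Ioc x₀ x,
          (Complex.exp (-(Complex.I * z) * ((y:ℂ) - (x:ℂ))) * (u y * g y 1) -
           Complex.exp (-(Complex.I * z) * ((y:ℂ) - (x:ℂ))) * (u y * h y 1))‖
        ≤ ∫ y in Ioc x₀ x, ‖u y‖ * δ := by
          apply norm_integral_le_of_norm_le
            (hu_abs.mono_set Ioc_subset_Ioi_self)
          filter_upwards [ae_restrict_of_forall_mem measurableSet_Ioc
            (fun y (hy : y ∈ Ioc x₀ x) => hy)] with y hy
          have hrw : Complex.exp (-(Complex.I * z) * ((y:ℂ) - (x:ℂ))) * (u y * g y 1) -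
              Complex.exp (-(Complex.I * z) * ((y:ℂ) - (x:ℂ))) * (u y * h y 1)
              = Complex.exp (-(Complex.I * z) * ((y:ℂ) - (x:ℂ))) * (u y * (g y 1 - h y 1)) := by
            ring
          rw [hrw]
          have h1 : ‖Complex.exp (-(Complex.I * z) * ((y:ℂ) - (x:ℂ)))‖ ≤ 1 :=
            abs_kernel_le_one hz hy.2
          have h2 : ‖g y 1 - h y 1‖ ≤ δ := hd1B y (le_of_lt hy.1)
          calc ‖Complex.exp (-(Complex.I * z) * ((y:ℂ) - (x:ℂ))) * (u y * (g y 1 - h y 1))‖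
              = ‖Complex.exp (-(Complex.I * z) * ((y:ℂ) - (x:ℂ)))‖ *
                  (‖u y‖ * ‖g y 1 - h y 1‖) := by
                simp [norm_mul]
            _ ≤ 1 * (‖u y‖ * δ) := by gcongr
            _ = ‖u y‖ * δ := one_mul _
      _ ≤ ∫ y in Ioi x₀, ‖u y‖ * δ := by
          apply setIntegral_mono_set hu_abs
          · filter_upwards with y using mul_nonneg (norm_nonneg _) hδ
          · exact HasSubset.Subset.eventuallyLE Ioc_subset_Ioi_self
      _ = a * δ := hIoi
  · simp only [Matrix.cons_val_one, Matrix.head_cons]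
    rw [← MeasureTheory.integral_sub Ig0 Ih0]
    calc ‖∫ y in Ioi x, ((starRingEnd ℂ) (u y) * g y 0 - (starRingEnd ℂ) (u y) * h y 0)‖
        ≤ ∫ y in Ioi x, ‖u y‖ * δ := by
          apply norm_integral_le_of_norm_le
            (hu_abs.mono_set (Ioi_subset_Ioi hx))
          filter_upwards [ae_restrict_of_forall_mem measurableSet_Ioi
            (fun y (hy : y ∈ Ioi x) => hy)] with y hy
          have hrw : (starRingEnd ℂ) (u y) * g y 0 - (starRingEnd ℂ) (u y) * h y 0
              = (starRingEnd ℂ) (u y) * (g y 0 - h y 0) := by ring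
          rw [hrw]
          have h2 : ‖g y 0 - h y 0‖ ≤ δ := hd0B y (le_of_lt (lt_of_le_of_lt hx hy))
          calc ‖(starRingEnd ℂ) (u y) * (g y 0 - h y 0)‖
              = ‖u y‖ * ‖g y 0 - h y 0‖ := by simp [norm_mul]
            _ ≤ ‖u y‖ * δ := by gcongr
      _ ≤ ∫ y in Ioi x₀, ‖u y‖ * δ := by
          apply setIntegral_mono_set hu_abs
          · filter_upwards with y using mul_nonneg (norm_nonneg _) hδ
          · exact HasSubset.Subset.eventuallyLE (Ioi_subset_Ioi hx)
      _ = a * δ := hIoi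

lemma contOn_primitive (ψ : ℝ → ℂ) (hψ : ∀ b : ℝ, IntegrableOn ψ (Ioc x₀ b)) :
    ContinuousOn (fun x => ∫ y in x₀..x, ψ y) (Ici x₀) := by
  intro x hx
  have hx' : (x₀ : ℝ) ≤ x := hx
  have hint2 : IntervalIntegrable ψ volume (min x₀ x₀) (max x₀ (x + 1)) := by
    rw [min_self, max_eq_right (by linarith : x₀ ≤ x + 1),
      intervalIntegrable_iff_integrableOn_Ioc_of_le (by linarith : x₀ ≤ x + 1)]
    exact hψ (x + 1)
  have hc := intervalIntegral.continuousWithinAt_primitive (μ := volume) (b₀ := x)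
    (measure_singleton x) hint2
  apply hc.mono_of_mem_nhdsWithin
  have hmem : Ici x₀ ∩ Iio (x + 1) ∈ 𝓝[Ici x₀] x :=
    inter_mem_nhdsWithin _ (Iio_mem_nhds (lt_add_one x))
  exact mem_of_superset hmem (fun y hy => ⟨hy.1, le_of_lt hy.2⟩)

/-- Continuity of `x ↦ T g x` on `[x₀, ∞)` for bounded measurable `g`. -/
lemma T_contOn (hint : IntegrableOn u (Ioi x₀))
    (g : ℝ → Fin 2 → ℂ)
    (hg0 : AEStronglyMeasurable (fun y => g y 0) (volume.restrict (Ici x₀)))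
    (hg1 : AEStronglyMeasurable (fun y => g y 1) (volume.restrict (Ici x₀)))
    (M : ℝ) (hgB : ∀ y ∈ Ici x₀, ‖g y‖ ≤ M) :
    ContinuousOn (fun x => volterraT u z x₀ g x) (Ici x₀) := by
  have hg0B : ∀ y ∈ Ici x₀, ‖g y 0‖ ≤ M := fun y hy =>
    le_trans (norm_le_pi_norm (g y) 0) (hgB y hy)
  have hg1B : ∀ y ∈ Ici x₀, ‖g y 1‖ ≤ M := fun y hy =>
    le_trans (norm_le_pi_norm (g y) 1) (hgB y hy)
  set ψ₁ : ℝ → ℂ := fun y => Complex.exp (-(Complex.I * z) * (y : ℂ)) * (u y * g y 1) with hψ₁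
  set ψ₂ : ℝ → ℂ := fun y => (starRingEnd ℂ) (u y) * g y 0 with hψ₂
  have hiψ₁ : ∀ b : ℝ, IntegrableOn ψ₁ (Ioc x₀ b) := fun b =>
    integrable_exp_mul hint (fun y => g y 1) hg1 M hg1B (-(Complex.I * z)) b
  have hiψ₂ : IntegrableOn ψ₂ (Ioi x₀) :=
    integrable_conj_mul hint (fun y => g y 0) hg0 M hg0B x₀ le_rfl
  have hiψ₂' : ∀ b : ℝ, IntegrableOn ψ₂ (Ioc x₀ b) := fun b =>
    hiψ₂.mono_set Ioc_subset_Ioi_self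
  have heq : ∀ x ∈ Ici x₀, volterraT u z x₀ g x =
      ![Complex.exp ((Complex.I * z) * (x : ℂ)) * ∫ y in x₀..x, ψ₁ y,
        (∫ y in Ioi x₀, ψ₂ y) - ∫ y in x₀..x, ψ₂ y] := by
    intro x hx
    rw [volterraT_eq]
    have e0 : (∫ y in x₀..x,
          Complex.exp (-(Complex.I * z) * ((y : ℂ) - (x : ℂ))) * (u y * g y 1))
        = Complex.exp ((Complex.I * z) * (x : ℂ)) * ∫ y in x₀..x, ψ₁ y := by
      rw [← intervalIntegral.integral_const_mul]
      apply intervalIntegral.integral_congr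
      intro y _
      show Complex.exp (-(Complex.I * z) * ((y : ℂ) - (x : ℂ))) * (u y * g y 1)
          = Complex.exp ((Complex.I * z) * (x : ℂ)) *
              (Complex.exp (-(Complex.I * z) * (y : ℂ)) * (u y * g y 1))
      have h : -(Complex.I * z) * ((y : ℂ) - (x : ℂ))
          = (Complex.I * z) * (x : ℂ) + -(Complex.I * z) * (y : ℂ) := by ring
      rw [h, Complex.exp_add, mul_assoc]
    have e1 : (∫ y in Ioi x, ψ₂ y) = (∫ y in Ioi x₀, ψ₂ y) - ∫ y in x₀..x, ψ₂ y := by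
      rw [intervalIntegral.integral_of_le hx]
      have hun := setIntegral_union (Ioc_disjoint_Ioi_same) measurableSet_Ioi
        (hiψ₂' x) (hiψ₂.mono_set (Ioi_subset_Ioi hx)) (f := ψ₂) (μ := volume)
      rw [Ioc_union_Ioi_eq_Ioi hx] at hun
      rw [hun]
      ring
    rw [e0, e1]
  apply ContinuousOn.congr _ heq
  apply continuousOn_pi.2
  intro i
  fin_cases i
  · simp only [Matrix.cons_val_zero]
    apply ContinuousOn.mul
    · exact (Complex.continuous_exp.comp
        (continuous_const.mul Complex.continuous_ofReal)).continuousOn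
    · exact contOn_primitive ψ₁ hiψ₁
  · simp only [Matrix.cons_val_one, Matrix.head_cons]
    exact continuousOn_const.sub (contOn_primitive ψ₂ hiψ₂')

end VolterraAux

/-- For `q > 0`, `u ∈ H^{1,1}(ℝ⁺)` with `∫_{x₀}^∞ |u| < 1/2`, `x₀ > 0` and
`Im z > 0`, the integral equation `f = e₂ + T f` on `[x₀,∞)` has a bounded
solution `f`, obtained as the limit of the iterates `f₀ = e₂`,
`f_{k+1} = e₂ + T f_k`, which converge geometrically:
`‖f_{k+1} - f_k‖_{L^∞} ≤ c/2^k`. -/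
theorem volterra_iteration (q : ℝ) (hq : 0 < q) (u u' : ℝ → ℂ)
    (hAC : ∀ x y : ℝ, 0 ≤ x → 0 ≤ y → u y - u x = ∫ t in x..y, u' t)
    (hu2 : MemLp u 2 (volume.restrict (Ioi (0:ℝ))))
    (hu'2 : MemLp u' 2 (volume.restrict (Ioi (0:ℝ))))
    (hxu : MemLp (fun x : ℝ => (x : ℂ) * u x) 2 (volume.restrict (Ioi (0:ℝ))))
    (x₀ : ℝ) (hx₀ : 0 < x₀)
    (hint : IntegrableOn u (Ioi x₀))
    (hsmall : (∫ y in Ioi x₀, ‖u y‖) < 1/2)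
    (z : ℂ) (hz : 0 < z.im) :
    ∃ c : ℝ, 0 < c ∧
      ∀ F : ℕ → ℝ → Fin 2 → ℂ,
        (∀ x : ℝ, F 0 x = ![0, 1]) →
        (∀ (k : ℕ) (x : ℝ), F (k+1) x = ![0, 1] + volterraT u z x₀ (F k) x) →
        (∀ k : ℕ, ∀ x ∈ Ici x₀, ‖F (k+1) x - F k x‖ ≤ c / 2 ^ k) ∧
        ∃ f : ℝ → Fin 2 → ℂ,
          (∀ x ∈ Ici x₀, Tendsto (fun k => F k x) atTop (nhds (f x))) ∧
          (∃ M : ℝ, ∀ x ∈ Ici x₀, ‖f x‖ ≤ M) ∧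
          (∀ x ∈ Ici x₀, f x = ![0, 1] + volterraT u z x₀ f x) := by
  classical
  set a : ℝ := ∫ y in Ioi x₀, ‖u y‖ with ha
  have ha0 : 0 ≤ a := by
    apply integral_nonneg
    intro y
    exact norm_nonneg _
  have ha2 : a ≤ 1/2 := le_of_lt hsmall
  have he2 : ‖(![0, 1] : Fin 2 → ℂ)‖ ≤ 1 := by
    refine (pi_norm_le_iff_of_nonneg zero_le_one).2 ?_
    intro i
    fin_cases i <;> simp
  refine ⟨1, one_pos, ?_⟩
  intro F hF0 hFrec
  -- continuity and uniform bound of the iterates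
  have hmain : ∀ k : ℕ, ContinuousOn (F k) (Ici x₀) ∧ (∀ x ∈ Ici x₀, ‖F k x‖ ≤ 2) := by
    intro k
    induction k with
    | zero =>
      constructor
      · have h : F 0 = fun _ => ![0, 1] := funext hF0
        rw [h]; exact continuousOn_const
      · intro x _
        rw [hF0]
        linarith
    | succ k ih =>
      obtain ⟨ihc, ihb⟩ := ih
      have hm0 : AEStronglyMeasurable (fun y => F k y 0) (volume.restrict (Ici x₀)) :=
        ((continuous_apply (0 : Fin 2)).comp_continuousOn ihc).aestronglyMeasurable
          measurableSet_Ici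
      have hm1 : AEStronglyMeasurable (fun y => F k y 1) (volume.restrict (Ici x₀)) :=
        ((continuous_apply (1 : Fin 2)).comp_continuousOn ihc).aestronglyMeasurable
          measurableSet_Ici
      have hFr : F (k+1) = fun x => ![0, 1] + volterraT u z x₀ (F k) x :=
        funext fun x => hFrec k x
      constructor
      · rw [hFr]
        exact continuousOn_const.add (T_contOn hint (F k) hm0 hm1 2 ihb)
      · intro x hx
        rw [hFrec k x]
        have hTz : volterraT u z x₀ (fun _ => 0) x = 0 := volterraT_zero u z x₀ x
        have hT := T_sub_bound hint hz (F k) (fun _ => 0) hm0 hm1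
          aestronglyMeasurable_const aestronglyMeasurable_const 2 0 2 (by norm_num)
          ihb (by intro y _; simp) (by intro y hy; simpa using ihb y hy) x hx
        rw [hTz, sub_zero] at hT
        calc ‖![0, 1] + volterraT u z x₀ (F k) x‖
            ≤ ‖(![0, 1] : Fin 2 → ℂ)‖ + ‖volterraT u z x₀ (F k) x‖ := norm_add_le _ _
          _ ≤ 1 + a * 2 := add_le_add he2 hT
          _ ≤ 2 := by nlinarith
  have hmeas : ∀ (k : ℕ) (i : Fin 2),
      AEStronglyMeasurable (fun y => F k y i) (volume.restrict (Ici x₀)) := fun k i =>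
    ((continuous_apply i).comp_continuousOn (hmain k).1).aestronglyMeasurable measurableSet_Ici
  -- geometric difference bound
  have hdiff : ∀ k : ℕ, ∀ x ∈ Ici x₀, ‖F (k+1) x - F k x‖ ≤ (1:ℝ) / 2 ^ k := by
    intro k
    induction k with
    | zero =>
      intro x hx
      have h : F 1 x - F 0 x = volterraT u z x₀ (F 0) x := by
        rw [hFrec 0 x, hF0 x, add_sub_cancel_left]
      rw [h]
      have hTz : volterraT u z x₀ (fun _ => 0) x = 0 := volterraT_zero u z x₀ x
      have hF0B : ∀ y ∈ Ici x₀, ‖F 0 y‖ ≤ 1 := by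
        intro y _
        rw [hF0]
        exact he2
      have hT := T_sub_bound hint hz (F 0) (fun _ => 0) (hmeas 0 0) (hmeas 0 1)
        aestronglyMeasurable_const aestronglyMeasurable_const 1 0 1 zero_le_one
        hF0B (by intro y _; simp) (by intro y hy; simpa using hF0B y hy) x hx
      rw [hTz, sub_zero] at hT
      calc ‖volterraT u z x₀ (F 0) x‖ ≤ a * 1 := hT
        _ ≤ (1:ℝ) / 2 ^ 0 := by norm_num; linarith
    | succ k ih =>
      intro x hx
      have h : F (k+2) x - F (k+1) x
          = volterraT u z x₀ (F (k+1)) x - volterraT u z x₀ (F k) x := by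
        rw [hFrec (k+1) x, hFrec k x]
        abel
      rw [h]
      have hδ : (0:ℝ) ≤ 1 / 2 ^ k := by positivity
      have hT := T_sub_bound hint hz (F (k+1)) (F k) (hmeas (k+1) 0) (hmeas (k+1) 1)
        (hmeas k 0) (hmeas k 1) 2 2 ((1:ℝ) / 2 ^ k) hδ
        (hmain (k+1)).2 (hmain k).2 ih x hx
      calc ‖volterraT u z x₀ (F (k+1)) x - volterraT u z x₀ (F k) x‖
          ≤ a * ((1:ℝ) / 2 ^ k) := hT
        _ ≤ (1/2) * ((1:ℝ) / 2 ^ k) := by gcongr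
        _ = (1:ℝ) / 2 ^ (k+1) := by rw [pow_succ]; ring
  -- the geometric distance bound
  have hgeo : ∀ x ∈ Ici x₀, ∀ n : ℕ, dist (F n x) (F (n+1) x) ≤ 1 * (1/2 : ℝ) ^ n := by
    intro x hx n
    rw [dist_eq_norm, norm_sub_rev]
    calc ‖F (n+1) x - F n x‖ ≤ (1:ℝ) / 2 ^ n := hdiff n x hx
      _ = 1 * (1/2 : ℝ) ^ n := by rw [one_mul, div_pow, one_pow]
  have hcauchy : ∀ x ∈ Ici x₀, CauchySeq (fun k => F k x) := by
    intro x hx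
    exact cauchySeq_of_le_geometric (1/2) 1 (by norm_num) (hgeo x hx)
  set f : ℝ → Fin 2 → ℂ := fun x => limUnder atTop (fun k => F k x) with hf
  have htend : ∀ x ∈ Ici x₀, Tendsto (fun k => F k x) atTop (𝓝 (f x)) := fun x hx =>
    (hcauchy x hx).tendsto_limUnder
  have hfB : ∀ x ∈ Ici x₀, ‖f x‖ ≤ 2 := by
    intro x hx
    apply le_of_tendsto' (htend x hx).norm
    intro k
    exact (hmain k).2 x hx
  refine ⟨fun k x hx => hdiff k x hx, f, htend, ⟨2, hfB⟩, ?_⟩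
  -- the fixed point equation
  intro x hx
  have htail : ∀ k : ℕ, ∀ y ∈ Ici x₀, ‖F k y - f y‖ ≤ 2 * (1/2 : ℝ) ^ k := by
    intro k y hy
    have hd := dist_le_of_le_geometric_of_tendsto (1/2) 1 (by norm_num) (hgeo y hy)
      (htend y hy) k
    rw [dist_eq_norm] at hd
    calc ‖F k y - f y‖ ≤ 1 * (1/2 : ℝ) ^ k / (1 - 1/2) := hd
      _ = 2 * (1/2 : ℝ) ^ k := by ring
  have hfm : ∀ i : Fin 2,
      AEStronglyMeasurable (fun y => f y i) (volume.restrict (Ici x₀)) := by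
    intro i
    apply aestronglyMeasurable_of_tendsto_ae atTop (fun k => hmeas k i)
    filter_upwards [ae_restrict_of_forall_mem measurableSet_Ici
      (fun y (hy : y ∈ Ici x₀) => hy)] with y hy
    exact ((continuous_apply i).tendsto (f y)).comp (htend y hy)
  have hTk : Tendsto (fun k => volterraT u z x₀ (F k) x) atTop
      (𝓝 (volterraT u z x₀ f x)) := by
    rw [tendsto_iff_norm_sub_tendsto_zero]
    have hb : ∀ k : ℕ, ‖volterraT u z x₀ (F k) x - volterraT u z x₀ f x‖
        ≤ a * (2 * (1/2 : ℝ) ^ k) := by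
      intro k
      exact T_sub_bound hint hz (F k) f (hmeas k 0) (hmeas k 1) (hfm 0) (hfm 1)
        2 2 (2 * (1/2 : ℝ) ^ k) (by positivity) (hmain k).2 hfB
        (fun y hy => htail k y hy) x hx
    apply squeeze_zero (fun k => norm_nonneg _) hb
    have hp : Tendsto (fun k : ℕ => (1/2 : ℝ) ^ k) atTop (𝓝 0) :=
      tendsto_pow_atTop_nhds_zero_of_lt_one (by norm_num) (by norm_num)
    have := hp.const_mul (a * 2)
    simp only [mul_zero] at this
    convert this using 2 with k
    ring
  have h1 : Tendsto (fun k => F (k+1) x) atTop (𝓝 (f x)) :=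
    (htend x hx).comp (tendsto_add_atTop_nat 1)
  have h2 : Tendsto (fun k => F (k+1) x) atTop
      (𝓝 (![0, 1] + volterraT u z x₀ f x)) := by
    have h2' := hTk.const_add (![0, 1] : Fin 2 → ℂ)
    exact h2'.congr (fun k => (hFrec k x).symm)
  exact tendsto_nhds_unique h1 h2
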